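/- Let 𝕂 = ℚ, 𝒪 = ℤ, and fix 0 < ε < 1 with fundamental domain ℱ_ε = [−ε, 1−ε) ⊂ ℝ. For every monic p ∈ ℤ[x] there exists M ∈ ℕ such that for all integers m with |m| ≥ M, the pair (p(x) + m·sgn, D_{ℱ_ε, p(0)+m·sgn}) is a GNS with finiteness property for both signs; i.e., (p(x) + m, D) and (p(x) − m, D′) both have the finiteness property for m ≥ M, with the respective digit sets D = (( p(0)+m)·ℱ_ε) ∩ ℤ and D′ = ((p(0)−m)·ℱ_ε) ∩ ℤ. -/

import Mathlib

open Polynomial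

/-- `D` is a complete residue system modulo `ϑ` containing `0`. -/
def IsCRS {R : Type*} [CommRing R] (ϑ : R) (D : Set R) : Prop :=
  0 ∈ D ∧ ∀ β : R, ∃! d : R, d ∈ D ∧ ϑ ∣ β - d

/-- `a` admits a finite digit representation modulo `p` with digits in `D`. -/
def HasRep {R : Type*} [CommRing R] (p : Polynomial R) (D : Set R) (a : Polynomial R) : Prop :=
  ∃ (ℓ : ℕ) (d : ℕ → R), (∀ j < ℓ, d j ∈ D) ∧
    p ∣ a - ∑ j ∈ Finset.range ℓ, Polynomial.C (d j) * Polynomial.X ^ j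

/-- The GNS `(p, D)` has the finiteness property. -/
def FinitenessProperty {R : Type*} [CommRing R] (p : Polynomial R) (D : Set R) : Prop :=
  ∀ a : Polynomial R, HasRep p D a

namespace S15

variable {ε : ℝ}


lemma hasRep_of_dvd {p : ℤ[X]} {D : Set ℤ} {a a' : ℤ[X]}
    (h : p ∣ a - a') (h' : HasRep p D a') : HasRep p D a := by
  obtain ⟨ℓ, d, hd, hdvd⟩ := h'
  exact ⟨ℓ, d, hd, by simpa [sub_add_sub_cancel] using dvd_add h hdvd⟩

lemma hasRep_direct {p : ℤ[X]} {D : Set ℤ} {a : ℤ[X]} {n : ℕ} (hdeg : a.natDegree < n)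
    (hcoeff : ∀ j < n, a.coeff j ∈ D) : HasRep p D a := by
  refine ⟨n, fun j => a.coeff j, hcoeff, ?_⟩
  have := Polynomial.as_sum_range' a n hdeg
  simp only [Polynomial.C_mul_X_pow_eq_monomial]
  rw [← this, sub_self]
  exact dvd_zero _

lemma hasRep_cons {p : ℤ[X]} {D : Set ℤ} {a b : ℤ[X]} {d0 k : ℤ}
    (h : a = C d0 + X * b + C k * p) (hd0 : d0 ∈ D) (hb : HasRep p D b) : HasRep p D a := by
  obtain ⟨ℓ, d, hd, hdvd⟩ := hb
  refine ⟨ℓ + 1, fun j => if j = 0 then d0 else d (j - 1), ?_, ?_⟩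
  · intro j hj
    rcases Nat.eq_zero_or_pos j with h0 | h0
    · simpa [h0] using hd0
    · have : j - 1 < ℓ := by omega
      simp only [Nat.pos_iff_ne_zero.mp h0, if_neg]
      simpa [Nat.pos_iff_ne_zero.mp h0] using hd _ this
  · have key : a - ∑ j ∈ Finset.range (ℓ + 1),
        C (if j = 0 then d0 else d (j - 1)) * X ^ j
        = X * (b - ∑ j ∈ Finset.range ℓ, C (d j) * X ^ j) + C k * p := by
      rw [Finset.sum_range_succ']
      simp only [Nat.succ_ne_zero, if_neg, Nat.add_sub_cancel, if_pos, Nat.add_eq_zero, if_false]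
      have hX : X * ∑ j ∈ Finset.range ℓ, C (d j) * X ^ j
          = ∑ x ∈ Finset.range ℓ, C (d x) * X ^ (x + 1) := by
        rw [Finset.mul_sum]
        exact Finset.sum_congr rfl fun x _ => by ring
      rw [h, mul_sub, hX]
      ring
    rw [key]
    exact dvd_add (Dvd.dvd.mul_left hdvd X) (Dvd.dvd.mul_left dvd_rfl (C k))

lemma const_case {θ : ℤ} {D : Set ℤ} (hCRS : ∀ z : ℤ, ∃ d ∈ D, θ ∣ z - d) :
    FinitenessProperty (C θ) D := by
  intro a
  choose d hd hdvd using hCRS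
  refine ⟨a.natDegree + 1, fun j => d (a.coeff j), fun j _ => hd _, ?_⟩
  rw [Polynomial.C_dvd_iff_dvd_coeff]
  intro i
  rw [Polynomial.coeff_sub, Polynomial.finset_sum_coeff]
  simp only [Polynomial.coeff_C_mul, Polynomial.coeff_X_pow, mul_ite, mul_one, mul_zero]
  rw [Finset.sum_ite_eq (Finset.range (a.natDegree + 1))]
  by_cases hi : i ∈ Finset.range (a.natDegree + 1)
  · rw [if_pos hi]; exact hdvd _
  · rw [if_neg hi]
    have : a.coeff i = 0 := by
      apply Polynomial.coeff_eq_zero_of_natDegree_lt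
      simpa using Nat.lt_of_not_le (by simpa using hi)
    simp [this]

/-- weight of the non-constant coefficients -/
def Qn (q : ℤ[X]) : ℕ := ∑ j ∈ Finset.range q.natDegree, 2 ^ j * (q.coeff (j + 1)).natAbs

/-- weighted size of a polynomial (degree < natDegree q) -/
def Nn (q a : ℤ[X]) : ℕ := ∑ j ∈ Finset.range q.natDegree, 2 ^ j * (a.coeff j).natAbs

lemma one_le_Qn {q : ℤ[X]} (hq : q.Monic) (hn : 1 ≤ q.natDegree) : 1 ≤ Qn q := by
  have hmem : q.natDegree - 1 ∈ Finset.range q.natDegree := by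
    simp; omega
  have hterm : 1 ≤ 2 ^ (q.natDegree - 1) * (q.coeff (q.natDegree - 1 + 1)).natAbs := by
    have h1 : q.natDegree - 1 + 1 = q.natDegree := by omega
    rw [h1, hq.coeff_natDegree]
    simp
    exact Nat.one_le_two_pow
  unfold Qn
  calc 1 ≤ 2 ^ (q.natDegree - 1) * (q.coeff (q.natDegree - 1 + 1)).natAbs := hterm
    _ ≤ _ := Finset.single_le_sum (f := fun j => 2 ^ j * (q.coeff (j + 1)).natAbs)
        (fun i _ => Nat.zero_le _) hmem

lemma natAbs_coeff_le_Nn {q a : ℤ[X]} {j : ℕ} (hj : j < q.natDegree) :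
    (a.coeff j).natAbs ≤ Nn q a := by
  unfold Nn
  calc (a.coeff j).natAbs ≤ 2 ^ j * (a.coeff j).natAbs := Nat.le_mul_of_pos_left _ (Nat.pow_pos (by norm_num))
    _ ≤ _ := Finset.single_le_sum (f := fun j => 2 ^ j * (a.coeff j).natAbs)
        (fun i _ => Nat.zero_le _) (Finset.mem_range.mpr hj)

lemma mainLemma {q : ℤ[X]} (hq : q.Monic) (hn : 1 ≤ q.natDegree) {D : Set ℤ}
    (hCRS : ∀ z : ℤ, ∃ d ∈ D, q.coeff 0 ∣ z - d)
    (hDbd : ∀ d ∈ D, |d| < |q.coeff 0|)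
    (hSmall : ∀ z : ℤ, |z| ≤ 4 * (Qn q : ℤ) → z ∈ D)
    (hT : 2 * (Qn q : ℤ) ≤ |q.coeff 0|) :
    FinitenessProperty q D := by
  set n := q.natDegree with hndef
  set θ := q.coeff 0 with hθdef
  have hQ1 : 1 ≤ (Qn q : ℤ) := by exact_mod_cast one_le_Qn hq hn
  have hTpos : 0 < |θ| := by linarith
  -- endgame
  have endgame : ∀ a : ℤ[X], a.natDegree < n → Nn q a ≤ 4 * Qn q → HasRep q D a := by
    intro a ha hN
    refine hasRep_direct ha (fun j hj => hSmall _ ?_)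
    have h1 : (a.coeff j).natAbs ≤ 4 * Qn q := le_trans (natAbs_coeff_le_Nn hj) hN
    calc |a.coeff j| = ((a.coeff j).natAbs : ℤ) := (Int.abs_eq_natAbs _)
      _ ≤ 4 * (Qn q : ℤ) := by exact_mod_cast h1
  -- the main induction
  have rep : ∀ m : ℕ, ∀ a : ℤ[X], a.natDegree < n → Nn q a ≤ m → HasRep q D a := by
    intro m
    induction m with
    | zero =>
      intro a ha hN
      exact endgame a ha (le_trans hN (Nat.zero_le _))
    | succ m ih =>
      intro a ha hN
      by_cases hend : Nn q a ≤ 4 * Qn q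
      · exact endgame a ha hend
      · -- one division step
        obtain ⟨d0, hd0D, hdvd0⟩ := hCRS (a.coeff 0)
        obtain ⟨k, hk⟩ := hdvd0
        set c : ℤ[X] := a - C d0 - C k * q with hc
        have hc0 : c.coeff 0 = 0 := by
          simp only [hc, Polynomial.coeff_sub, Polynomial.coeff_C_mul, Polynomial.coeff_C_zero]
          linear_combination hk
        set b := c.divX with hb
        have hbc : ∀ j, b.coeff j = a.coeff (j + 1) - k * q.coeff (j + 1) := by
          intro j
          rw [hb, Polynomial.coeff_divX, hc]
          rw [Polynomial.coeff_sub, Polynomial.coeff_sub, Polynomial.coeff_C_mul, Polynomial.coeff_C]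
          simp
        have hid : a = C d0 + X * b + C k * q := by
          have h2 : b * X + C (c.coeff 0) = c := Polynomial.divX_mul_X_add c
          rw [hc0, map_zero, add_zero] at h2
          have h3 : a = c + C d0 + C k * q := by rw [hc]; ring
          rw [h3, ← h2]; ring
        have hbdeg : b.natDegree < n := by
          rcases eq_or_ne b 0 with h0 | h0
          · rw [h0]; exact lt_of_lt_of_le (by simp) hn
          · by_contra hcon
            push_neg at hcon
            have h1 : a.coeff (b.natDegree + 1) = 0 :=
              Polynomial.coeff_eq_zero_of_natDegree_lt (by omega)
            have h2 : q.coeff (b.natDegree + 1) = 0 :=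
              Polynomial.coeff_eq_zero_of_natDegree_lt (by omega)
            have h3 : b.coeff b.natDegree = 0 := by rw [hbc, h1, h2]; ring
            exact h0 (Polynomial.leadingCoeff_eq_zero.mp h3)
        -- key decrease
        have ha_n : a.coeff n = 0 := Polynomial.coeff_eq_zero_of_natDegree_lt ha
        have hNa : (Nn q a : ℤ) = |a.coeff 0| + 2 * ∑ j ∈ Finset.range n, 2 ^ j * |a.coeff (j + 1)| := by
          have e1 : (Nn q a : ℤ) = ∑ j ∈ Finset.range n, 2 ^ j * |a.coeff j| := by
            rw [Nn]
            push_cast [Int.natCast_natAbs]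
            rfl
          have e2 : (∑ j ∈ Finset.range n, 2 ^ j * |a.coeff j| : ℤ)
              = ∑ j ∈ Finset.range (n + 1), 2 ^ j * |a.coeff j| := by
            rw [Finset.sum_range_succ, ha_n]
            simp
          have e3 : (∑ j ∈ Finset.range (n + 1), 2 ^ j * |a.coeff j| : ℤ)
              = (∑ j ∈ Finset.range n, 2 ^ (j + 1) * |a.coeff (j + 1)|) + 2 ^ 0 * |a.coeff 0| :=
            Finset.sum_range_succ' _ n
          rw [e1, e2, e3, Finset.mul_sum]
          have e4 : ∀ j ∈ Finset.range n, (2:ℤ) ^ (j + 1) * |a.coeff (j + 1)| = 2 * (2 ^ j * |a.coeff (j + 1)|) :=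
            fun j _ => by ring
          rw [Finset.sum_congr rfl e4]
          ring
        have hQcast : (Qn q : ℤ) = ∑ j ∈ Finset.range n, 2 ^ j * |q.coeff (j + 1)| := by
          rw [Qn]
          push_cast [Int.natCast_natAbs]
          rfl
        have hNb : (Nn q b : ℤ) ≤ (∑ j ∈ Finset.range n, 2 ^ j * |a.coeff (j + 1)|) + |k| * (Qn q : ℤ) := by
          have e1 : (Nn q b : ℤ) = ∑ j ∈ Finset.range n, 2 ^ j * |b.coeff j| := by
            rw [Nn]
            push_cast [Int.natCast_natAbs]
            rfl
          rw [e1, hQcast, Finset.mul_sum, ← Finset.sum_add_distrib]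
          refine Finset.sum_le_sum fun j _ => ?_
          rw [hbc]
          have h1 : |a.coeff (j + 1) - k * q.coeff (j + 1)| ≤ |a.coeff (j + 1)| + |k| * |q.coeff (j + 1)| := by
            calc |a.coeff (j + 1) - k * q.coeff (j + 1)| ≤ |a.coeff (j + 1)| + |k * q.coeff (j + 1)| := abs_sub _ _
              _ = |a.coeff (j + 1)| + |k| * |q.coeff (j + 1)| := by rw [abs_mul]
          nlinarith [pow_pos (by norm_num : (0:ℤ) < 2) j, h1, abs_nonneg (a.coeff (j+1) - k * q.coeff (j+1))]
        have hθk : |θ| * |k| ≤ |a.coeff 0| + |θ| - 1 := by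
          have h1 : |θ| * |k| = |a.coeff 0 - d0| := by rw [hk, abs_mul]
          have h2 : |a.coeff 0 - d0| ≤ |a.coeff 0| + |d0| := abs_sub _ _
          have h3 : |d0| < |θ| := hDbd _ hd0D
          omega
        have h4Q : 4 * (Qn q : ℤ) + 1 ≤ (Nn q a : ℤ) := by
          push_neg at hend
          exact_mod_cast hend
        have hA1 : (0:ℤ) ≤ ∑ j ∈ Finset.range n, 2 ^ j * |a.coeff (j + 1)| :=
          Finset.sum_nonneg fun j _ => mul_nonneg (by positivity) (abs_nonneg _)
        have hkey : Nn q b < Nn q a := by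
          have goalZ : (Nn q b : ℤ) < (Nn q a : ℤ) := by
            set x0 := |a.coeff 0| with hx0def
            set A1 := ∑ j ∈ Finset.range n, 2 ^ j * |a.coeff (j + 1)| with hA1def
            set Qz := (Qn q : ℤ) with hQzdef
            set T := |θ| with hTdef
            have hx0 : 0 ≤ x0 := abs_nonneg _
            have hK : 0 ≤ |k| := abs_nonneg _
            have step1 : T * (|k| * Qz) ≤ (x0 + T - 1) * Qz := by
              have := mul_le_mul_of_nonneg_right hθk (by linarith : (0:ℤ) ≤ Qz)
              nlinarith [this]
            have step2 : (x0 + T - 1) * Qz < T * (x0 + A1) := by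
              nlinarith [mul_nonneg hx0 (by linarith : (0:ℤ) ≤ T - 2 * Qz),
                mul_le_mul_of_nonneg_left (by linarith [h4Q, hNa] : 4 * Qz + 1 ≤ x0 + 2 * A1) hTpos.le]
            have := lt_of_mul_lt_mul_left (lt_of_le_of_lt step1 step2) hTpos.le
            linarith [hNb, hNa, this]
          exact_mod_cast goalZ
        exact hasRep_cons hid hd0D (ih b hbdeg (by omega))
  -- reduce arbitrary a mod q
  intro a
  have hq1 : q ≠ 1 := by
    intro h
    have h0 : q.natDegree = 0 := by rw [h, Polynomial.natDegree_one]
    omega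
  have hmod := Polynomial.natDegree_modByMonic_lt a hq hq1
  refine hasRep_of_dvd ?_ (rep (Nn q (a %ₘ q)) _ hmod le_rfl)
  exact ⟨a /ₘ q, by linear_combination -(Polynomial.modByMonic_add_div a q)⟩



lemma digit_exists (hε0 : 0 < ε) (hε1 : ε < 1) {θ : ℤ} (hθ : θ ≠ 0) (z : ℤ) :
    ∃ d ∈ {τ : ℤ | ∃ r ∈ Set.Ico (-ε) (1 - ε), (τ : ℝ) = (θ : ℝ) * r}, θ ∣ z - d := by
  set k : ℤ := ⌊(z : ℝ) / (θ : ℝ) + ε⌋ with hk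
  refine ⟨z - θ * k, ⟨(z : ℝ) / (θ : ℝ) - k, ⟨?_, ?_⟩, ?_⟩, ⟨k, by ring⟩⟩
  · have := Int.floor_le ((z : ℝ) / (θ : ℝ) + ε)
    rw [← hk] at this
    linarith
  · have := Int.lt_floor_add_one ((z : ℝ) / (θ : ℝ) + ε)
    rw [← hk] at this
    linarith
  · have hθR : (θ : ℝ) ≠ 0 := Int.cast_ne_zero.mpr hθ
    push_cast
    field_simp

lemma digit_bound (hε0 : 0 < ε) (hε1 : ε < 1) {θ : ℤ} (hθ : θ ≠ 0) {d : ℤ}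
    (hd : d ∈ {τ : ℤ | ∃ r ∈ Set.Ico (-ε) (1 - ε), (τ : ℝ) = (θ : ℝ) * r}) : |d| < |θ| := by
  obtain ⟨r, ⟨hr1, hr2⟩, he⟩ := hd
  have hθR : (0 : ℝ) < |(θ : ℝ)| := abs_pos.mpr (Int.cast_ne_zero.mpr hθ)
  have hr : |r| < 1 := abs_lt.mpr ⟨by linarith, by linarith⟩
  have : |(d : ℝ)| < |(θ : ℝ)| := by
    rw [he, abs_mul]
    nlinarith
  exact_mod_cast (by push_cast [Int.cast_abs]; exact this : ((|d| : ℤ) : ℝ) < ((|θ| : ℤ) : ℝ))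

lemma digit_small (hε0 : 0 < ε) (hε1 : ε < 1) {θ : ℤ} {B : ℤ} (hB : 0 ≤ B)
    (h1 : (B : ℝ) < ε * |(θ : ℝ)|) (h2 : (B : ℝ) < (1 - ε) * |(θ : ℝ)|) {z : ℤ}
    (hz : |z| ≤ B) :
    z ∈ {τ : ℤ | ∃ r ∈ Set.Ico (-ε) (1 - ε), (τ : ℝ) = (θ : ℝ) * r} := by
  have hBR : (0 : ℝ) ≤ (B : ℝ) := by exact_mod_cast hB
  have hθR : (0 : ℝ) < |(θ : ℝ)| := by
    rcases (abs_nonneg ((θ : ℤ) : ℝ)).lt_or_eq with h | h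
    · exact h
    · rw [← h, mul_zero] at h1
      linarith
  have hθ0 : (θ : ℝ) ≠ 0 := by
    intro h
    rw [h] at hθR
    simp at hθR
  refine ⟨(z : ℝ) / (θ : ℝ), ⟨?_, ?_⟩, by field_simp⟩
  · have habs : |(z : ℝ) / (θ : ℝ)| < ε := by
      rw [abs_div, div_lt_iff₀ hθR]
      have hzc : |(z : ℝ)| ≤ (B : ℝ) := by exact_mod_cast (by push_cast [Int.cast_abs]; exact_mod_cast hz : ((|z| : ℤ) : ℝ) ≤ (B : ℝ))
      linarith
    have := neg_lt_of_abs_lt habs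
    linarith [neg_abs_le ((z : ℝ) / (θ : ℝ))]
  · have habs : |(z : ℝ) / (θ : ℝ)| < 1 - ε := by
      rw [abs_div, div_lt_iff₀ hθR]
      have hzc : |(z : ℝ)| ≤ (B : ℝ) := by exact_mod_cast (by push_cast [Int.cast_abs]; exact_mod_cast hz : ((|z| : ℤ) : ℝ) ≤ (B : ℝ))
      linarith
    linarith [le_abs_self ((z : ℝ) / (θ : ℝ))]


lemma wrapC (hε0 : 0 < ε) (hε1 : ε < 1) {θ : ℤ} (hθ : θ ≠ 0) :
    FinitenessProperty (C θ) {τ : ℤ | ∃ r ∈ Set.Ico (-ε) (1 - ε), (τ : ℝ) = (θ : ℝ) * r} :=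
  const_case (digit_exists hε0 hε1 hθ)

lemma wrapMain (hε0 : 0 < ε) (hε1 : ε < 1) (q : ℤ[X]) (θ : ℤ) (hθq : q.coeff 0 = θ)
    (hq : q.Monic) (hn : 1 ≤ q.natDegree)
    (hT : 2 * (Qn q : ℤ) ≤ |θ|)
    (h1 : 4 * (Qn q : ℝ) < ε * |(θ : ℝ)|)
    (h2 : 4 * (Qn q : ℝ) < (1 - ε) * |(θ : ℝ)|) :
    FinitenessProperty q {τ : ℤ | ∃ r ∈ Set.Ico (-ε) (1 - ε), (τ : ℝ) = (θ : ℝ) * r} := by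
  subst hθq
  have hQ1 : 1 ≤ (Qn q : ℤ) := by exact_mod_cast one_le_Qn hq hn
  have hθ : q.coeff 0 ≠ 0 := by
    intro h
    rw [h] at hT
    simp at hT
    omega
  refine mainLemma hq hn (digit_exists hε0 hε1 hθ) (fun d hd => digit_bound hε0 hε1 hθ hd)
    (fun z hz => digit_small hε0 hε1 (by positivity) ?_ ?_ hz) hT
  · push_cast
    exact h1
  · push_cast
    exact h2

end S15

open S15

theorem statement15 (ε : ℝ) (hε0 : 0 < ε) (hε1 : ε < 1)
    (p : Polynomial ℤ) (hp : p.Monic) :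
    ∃ M : ℕ, ∀ m : ℤ, (M : ℤ) ≤ m →
      FinitenessProperty (p + Polynomial.C m)
        {τ : ℤ | ∃ r ∈ Set.Ico (-ε) (1 - ε), (τ : ℝ) = ((p.coeff 0 + m : ℤ) : ℝ) * r} ∧
      FinitenessProperty (p - Polynomial.C m)
        {τ : ℤ | ∃ r ∈ Set.Ico (-ε) (1 - ε), (τ : ℝ) = ((p.coeff 0 - m : ℤ) : ℝ) * r} := by
  by_cases hdeg : p.natDegree = 0
  · -- constant case : p = 1
    have hp1 : p = 1 := hp.natDegree_eq_zero.mp hdeg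
    have hc0 : p.coeff 0 = 1 := by rw [hp1]; simp
    refine ⟨2, fun m hm => ⟨?_, ?_⟩⟩
    · have he : p + C m = C (p.coeff 0 + m) := by
        rw [map_add, hc0, hp1, Polynomial.C_1]
      rw [he]
      exact wrapC hε0 hε1 (by rw [hc0]; omega)
    · have he : p - C m = C (p.coeff 0 - m) := by
        rw [map_sub, hc0, hp1, Polynomial.C_1]
      rw [he]
      exact wrapC hε0 hε1 (by rw [hc0]; omega)
  · -- main case : deg p ≥ 1
    have hn1 : 1 ≤ p.natDegree := by omega
    set Qp : ℕ := ∑ j ∈ Finset.range p.natDegree, 2 ^ j * (p.coeff (j + 1)).natAbs with hQpdef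
    obtain ⟨K1, hK1⟩ := exists_nat_gt ((4 * (Qp : ℝ) + 1) / ε)
    have hK1' : 4 * (Qp : ℝ) + 1 < K1 * ε := by
      rw [div_lt_iff₀ hε0] at hK1
      linarith
    obtain ⟨K2, hK2⟩ := exists_nat_gt ((4 * (Qp : ℝ) + 1) / (1 - ε))
    have hK2' : 4 * (Qp : ℝ) + 1 < K2 * (1 - ε) := by
      rw [div_lt_iff₀ (by linarith)] at hK2
      linarith
    set K := max K1 K2 with hKdef
    have keyFacts : ∀ z : ℤ, (p + C z).Monic ∧ (p + C z).natDegree = p.natDegree ∧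
        Qn (p + C z) = Qp ∧ (p + C z).coeff 0 = p.coeff 0 + z := by
      intro z
      have hdeg' : (p + C z).natDegree = p.natDegree := Polynomial.natDegree_add_C
      have hmon : (p + C z).Monic :=
        hp.add_of_left (lt_of_le_of_lt Polynomial.degree_C_le
          (Polynomial.natDegree_pos_iff_degree_pos.mp (by omega)))
      refine ⟨hmon, hdeg', ?_, by simp⟩
      unfold Qn
      rw [hdeg', hQpdef]
      refine Finset.sum_congr rfl fun j hj => ?_
      rw [Polynomial.coeff_add, Polynomial.coeff_C, if_neg (Nat.succ_ne_zero j), add_zero]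
    refine ⟨2 * Qp + K + (p.coeff 0).natAbs, fun m hm => ?_⟩
    have hm' : (2 * Qp + K : ℤ) + |p.coeff 0| ≤ m := by
      rw [Int.abs_eq_natAbs]
      exact_mod_cast hm
    -- numeric bounds, uniform in the sign
    have bounds : ∀ θ : ℤ, (2 * Qp + K : ℤ) ≤ |θ| →
        2 * (Qp : ℤ) ≤ |θ| ∧ 4 * (Qp : ℝ) < ε * |(θ : ℝ)| ∧ 4 * (Qp : ℝ) < (1 - ε) * |(θ : ℝ)| := by
      intro θ hθ
      have habs : ((2 * Qp + K : ℕ) : ℝ) ≤ |(θ : ℝ)| := by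
        rw [← Int.cast_abs]
        exact_mod_cast hθ
      have hK1K : (K1 : ℝ) ≤ ((2 * Qp + K : ℕ) : ℝ) := by
        have : K1 ≤ 2 * Qp + K := le_trans (le_max_left K1 K2) (by omega)
        exact_mod_cast this
      have hK2K : (K2 : ℝ) ≤ ((2 * Qp + K : ℕ) : ℝ) := by
        have : K2 ≤ 2 * Qp + K := le_trans (le_max_right K1 K2) (by omega)
        exact_mod_cast this
      refine ⟨by push_cast at hθ ⊢; omega, ?_, ?_⟩
      · have c1 : (K1 : ℝ) * ε ≤ |(θ : ℝ)| * ε :=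
          mul_le_mul_of_nonneg_right (le_trans hK1K habs) hε0.le
        nlinarith
      · have c1 : (K2 : ℝ) * (1 - ε) ≤ |(θ : ℝ)| * (1 - ε) :=
          mul_le_mul_of_nonneg_right (le_trans hK2K habs) (by linarith)
        nlinarith
    constructor
    · -- plus case
      obtain ⟨hmon, hdeg', hQeq, hc0⟩ := keyFacts m
      have hθabs : (2 * Qp + K : ℤ) ≤ |p.coeff 0 + m| := by
        have h1 : (2 * Qp + K : ℤ) ≤ p.coeff 0 + m := by
          have := abs_nonneg (p.coeff 0)
          have h2 : -(p.coeff 0) ≤ |p.coeff 0| := neg_le_abs _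
          push_cast at hm' ⊢
          linarith
        calc (2 * Qp + K : ℤ) ≤ p.coeff 0 + m := h1
          _ ≤ |p.coeff 0 + m| := le_abs_self _
      obtain ⟨b1, b2, b3⟩ := bounds _ hθabs
      exact wrapMain hε0 hε1 (p + C m) (p.coeff 0 + m) hc0 hmon (by omega)
        (by rw [hQeq]; exact b1) (by rw [hQeq]; exact b2) (by rw [hQeq]; exact b3)
    · -- minus case
      have hsub : p - C m = p + C (-m) := by rw [map_neg]; ring
      obtain ⟨hmon, hdeg', hQeq, hc0⟩ := keyFacts (-m)
      rw [← hsub] at hmon hdeg' hQeq hc0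
      have hc0' : (p - C m).coeff 0 = p.coeff 0 - m := by rw [hc0]; ring
      have hθabs : (2 * Qp + K : ℤ) ≤ |p.coeff 0 - m| := by
        have h1 : (2 * Qp + K : ℤ) ≤ -(p.coeff 0 - m) := by
          have h2 : p.coeff 0 ≤ |p.coeff 0| := le_abs_self _
          push_cast at hm' ⊢
          linarith
        calc (2 * Qp + K : ℤ) ≤ -(p.coeff 0 - m) := h1
          _ ≤ |p.coeff 0 - m| := neg_le_abs _
      obtain ⟨b1, b2, b3⟩ := bounds _ hθabs
      exact wrapMain hε0 hε1 (p - C m) (p.coeff 0 - m) hc0' hmon (by omega)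
        (by rw [hQeq]; exact b1) (by rw [hQeq]; exact b2) (by rw [hQeq]; exact b3)
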